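/- Let b ∈ ℂ, r > 0, and let g : ℂ → ℂ be analytic on the closed ball of center b and radius r with m := inf{‖g(z)‖ : ‖z − b‖ ≤ r} > 0. Then for every ε with 0 < ε < r·m/2, the map F(z) = ε/g(z) + b satisfies ‖F(z) − b‖ < r/2 for all z in the closed ball (so F maps the ball strictly into itself), and F has a fixed point z₀ with ‖z₀ − b‖ < r/2 and ‖F′(z₀)‖ < 1 (an attracting fixed point). -/

import Mathlib

/-- Let `g` be analytic on the closed ball of center `b` and radius `r > 0`,
with `m := inf {‖g z‖ : ‖z - b‖ ≤ r} > 0`. Then for `0 < ε < r m / 2` the map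
`F(z) = ε / g(z) + b` maps the closed ball strictly into the ball of radius
`r/2` about `b`, and `F` has an attracting fixed point `z₀` with
`‖z₀ - b‖ < r/2`. -/
theorem stmt_18 (b : ℂ) (r : ℝ) (hr : 0 < r) (g : ℂ → ℂ)
    (hg : ∀ z ∈ Metric.closedBall b r, AnalyticAt ℂ g z)
    (m : ℝ) (hm : m = sInf ((fun z => ‖g z‖) '' Metric.closedBall b r))
    (hm0 : 0 < m) (ε : ℝ) (hε0 : 0 < ε) (hε : ε < r * m / 2) :
    (∀ z ∈ Metric.closedBall b r, ‖((ε : ℂ) / g z + b) - b‖ < r / 2) ∧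
      ∃ z₀ : ℂ, ‖z₀ - b‖ < r / 2 ∧ (ε : ℂ) / g z₀ + b = z₀ ∧
        ‖deriv (fun z => (ε : ℂ) / g z + b) z₀‖ < 1 := by
  have hr2 : (0 : ℝ) < r / 2 := by linarith
  set S := Metric.closedBall b r with hS
  set s := Metric.closedBall b (r / 2) with hs
  have hsS : s ⊆ S := Metric.closedBall_subset_closedBall (by linarith)
  -- lower bound on ‖g z‖ on S
  have hlow : ∀ z ∈ S, m ≤ ‖g z‖ := by
    intro z hz
    rw [hm]
    exact csInf_le ⟨0, fun y ⟨w, _, hw⟩ => hw ▸ norm_nonneg _⟩ ⟨z, hz, rfl⟩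
  have hne : ∀ z ∈ S, g z ≠ 0 := by
    intro z hz h0
    have := hlow z hz
    rw [h0, norm_zero] at this
    linarith
  set f : ℂ → ℂ := fun z => (ε : ℂ) / g z with hf
  set F : ℂ → ℂ := fun z => (ε : ℂ) / g z + b with hF
  have hεm : ε / m < r / 2 := by
    rw [div_lt_iff₀ hm0]; nlinarith
  have hf_norm : ∀ z ∈ S, ‖f z‖ ≤ ε / m := by
    intro z hz
    simp only [hf, norm_div, Complex.norm_real, Real.norm_eq_abs, abs_of_pos hε0]
    exact div_le_div_of_nonneg_left hε0.le hm0 (hlow z hz)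
  -- part 1
  have part1 : ∀ z ∈ S, ‖((ε : ℂ) / g z + b) - b‖ < r / 2 := by
    intro z hz
    have h1 : ((ε : ℂ) / g z + b) - b = f z := by ring
    rw [h1]
    exact lt_of_le_of_lt (hf_norm z hz) hεm
  refine ⟨part1, ?_⟩
  -- differentiability of f on S
  have hfd : ∀ z ∈ S, DifferentiableAt ℂ f z := by
    intro z hz
    exact (differentiableAt_const _).div ((hg z hz).differentiableAt) (hne z hz)
  -- derivative bound on s via the Cauchy estimate
  set C : ℝ := ε / m / (r / 2) with hC
  have hC0 : 0 ≤ C := by positivity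
  have hC1 : C < 1 := by
    rw [hC, div_lt_one hr2]; exact hεm
  have hderiv_bound : ∀ z ∈ s, ‖deriv f z‖ ≤ C := by
    intro z hz
    have hsub : Metric.closedBall z (r / 2) ⊆ S := by
      rw [hS]
      apply Metric.closedBall_subset_closedBall'
      have : dist z b ≤ r / 2 := Metric.mem_closedBall.1 hz
      linarith
    have hdcc : DiffContOnCl ℂ f (Metric.ball z (r / 2)) := by
      constructor
      · intro w hw
        exact (hfd w (hsub (Metric.ball_subset_closedBall hw))).differentiableWithinAt
      · intro w hw
        rw [closure_ball z hr2.ne'] at hw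
        exact (hfd w (hsub hw)).continuousAt.continuousWithinAt
    exact Complex.norm_deriv_le_of_forall_mem_sphere_norm_le hr2 hdcc
      (fun w hw => hf_norm w (hsub (Metric.sphere_subset_closedBall hw)))
  have hderivF : ∀ z : ℂ, deriv F z = deriv f z := by
    intro z
    rw [hF, hf]
    exact deriv_add_const _
  -- F maps s to s
  have hmaps : Set.MapsTo F s s := by
    intro z hz
    have := part1 z (hsS hz)
    rw [hs, Metric.mem_closedBall, dist_eq_norm]
    exact (this).le
  -- Lipschitz constant
  set K : NNReal := ⟨C, hC0⟩ with hK
  have hK1 : K < 1 := by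
    rw [← NNReal.coe_lt_coe]
    exact hC1
  have hlip : LipschitzOnWith K F s := by
    apply Convex.lipschitzOnWith_of_nnnorm_deriv_le
    · intro x hx
      exact ((hfd x (hsS hx)).add_const b : DifferentiableAt ℂ F x)
    · intro x hx
      rw [← NNReal.coe_le_coe, coe_nnnorm]
      rw [hderivF]
      exact hderiv_bound x hx
    · exact convex_closedBall _ _
  have hcontr : ContractingWith K (hmaps.restrict F s s) :=
    ⟨hK1, hlip.mapsToRestrict hmaps⟩
  have hbs : b ∈ s := Metric.mem_closedBall_self hr2.le
  obtain ⟨z₀, hz₀s, hfix, -, -⟩ :=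
    hcontr.exists_fixedPoint' (Metric.isClosed_closedBall.isComplete) hmaps hbs
      (edist_ne_top _ _)
  refine ⟨z₀, ?_, ?_, ?_⟩
  · have := part1 z₀ (hsS hz₀s)
    have hfz : (ε : ℂ) / g z₀ + b = z₀ := hfix
    rwa [hfz] at this
  · exact hfix
  · calc ‖deriv F z₀‖ = ‖deriv f z₀‖ := by rw [hderivF]
      _ ≤ C := hderiv_bound z₀ hz₀s
      _ < 1 := hC1
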